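/- Let p be a prime different from 2 and 5, and let n be a positive integer. If p divides F_n but p² does not divide F_n, then π(p) ≠ π(p²). -/

import Mathlib

/-- The Pisano period `π(m)`: the least positive integer `k` such that
`F_{n+k} ≡ F_n (mod m)` for all `n ≥ 0`. -/
noncomputable def pisano (m : ℕ) : ℕ :=
  sInf {k : ℕ | 0 < k ∧ ∀ n : ℕ, Nat.fib (n + k) ≡ Nat.fib n [MOD m]}



private lemma period_iter {m k : ℕ} (h : ∀ n : ℕ, Nat.fib (n + k) ≡ Nat.fib n [MOD m]) :
    ∀ q n : ℕ, Nat.fib (n + q * k) ≡ Nat.fib n [MOD m] := by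
  intro q
  induction q with
  | zero => simp [Nat.ModEq.refl]
  | succ q ih =>
    intro n
    have : n + (q + 1) * k = (n + q * k) + k := by ring
    rw [this]
    exact (h (n + q * k)).trans (ih n)

private lemma pisano_dvd {m k : ℕ} (hk : 0 < k)
    (h : ∀ n : ℕ, Nat.fib (n + k) ≡ Nat.fib n [MOD m]) : pisano m ∣ k := by
  set S := {k : ℕ | 0 < k ∧ ∀ n : ℕ, Nat.fib (n + k) ≡ Nat.fib n [MOD m]} with hS
  have hne : S.Nonempty := ⟨k, hk, h⟩
  have hmem : pisano m ∈ S := Nat.sInf_mem hne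
  obtain ⟨hpos, hper⟩ := hmem
  set π := pisano m
  have hr : ∀ n : ℕ, Nat.fib (n + k % π) ≡ Nat.fib n [MOD m] := by
    intro n
    have h1 : Nat.fib (n + k % π + (k / π) * π) ≡ Nat.fib (n + k % π) [MOD m] :=
      period_iter hper (k / π) (n + k % π)
    have h2 : n + k % π + (k / π) * π = n + k := by
      simp only [Nat.add_assoc, Nat.add_comm (k % π) (k / π * π), Nat.mul_comm (k/π) π]
      exact congrArg (n + ·) (Nat.mod_add_div k π)
    rw [h2] at h1
    exact h1.symm.trans (h n)
  by_contra hdvd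
  have hrpos : 0 < k % π := Nat.pos_of_ne_zero (fun h0 => hdvd (Nat.dvd_of_mod_eq_zero h0))
  have : π ≤ k % π := Nat.sInf_le ⟨hrpos, hr⟩
  exact absurd this (Nat.not_le.mpr (Nat.mod_lt _ hpos))

private lemma pisano_mem {m k : ℕ} (hk : 0 < k)
    (h : ∀ n : ℕ, Nat.fib (n + k) ≡ Nat.fib n [MOD m]) :
    0 < pisano m ∧ ∀ n : ℕ, Nat.fib (n + pisano m) ≡ Nat.fib n [MOD m] := by
  have : pisano m ∈ {k : ℕ | 0 < k ∧ ∀ n : ℕ, Nat.fib (n + k) ≡ Nat.fib n [MOD m]} :=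
    Nat.sInf_mem ⟨k, hk, h⟩
  exact this
open Polynomial

private lemma exists_period_not_dvd (p : ℕ) (hp : p.Prime) (hp2 : p ≠ 2) (hp5 : p ≠ 5) :
    ∃ k : ℕ, 0 < k ∧ ¬ p ∣ k ∧ ∀ n : ℕ, Nat.fib (n + k) ≡ Nat.fib n [MOD p] := by
  haveI : Fact p.Prime := ⟨hp⟩
  have hodd : Odd p := hp.odd_of_ne_two hp2
  have hpm2 : p % 2 = 1 := Nat.odd_iff.mp hodd
  have hp2le : 2 ≤ p := hp.two_le
  set F := ZMod p
  set f : F[X] := X ^ 2 - X - 1 with hf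
  set R := AdjoinRoot f with hR
  have hdeg : f.degree = 2 := by
    rw [hf]
    compute_degree!
  haveI : Nontrivial R := AdjoinRoot.nontrivial f (by rw [hdeg]; norm_num)
  have hinj : Function.Injective (algebraMap F R) := (algebraMap F R).injective
  haveI : CharP R p := charP_of_injective_ringHom hinj p
  set φ : R := AdjoinRoot.root f with hφdef
  have hφ : φ ^ 2 = φ + 1 := by
    have := AdjoinRoot.eval₂_root f
    rw [hf] at this
    simp only [eval₂_sub, eval₂_pow, eval₂_X, eval₂_one] at this
    linear_combination this
  set ψ : R := 1 - φ with hψdef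
  have hψ : ψ ^ 2 = ψ + 1 := by rw [hψdef]; linear_combination hφ
  have hφψ : φ * ψ = -1 := by rw [hψdef]; linear_combination -hφ
  set s : R := 2 * φ - 1 with hsdef
  have hs : s ^ 2 = 5 := by rw [hsdef]; linear_combination 4 * hφ
  -- 5 and 2 are nonzero in F
  have h5F : (5 : F) ≠ 0 := by
    intro h
    have : p ∣ 5 := by
      have := (ZMod.natCast_eq_zero_iff 5 p).mp (by exact_mod_cast h)
      exact this
    exact hp5 ((Nat.prime_dvd_prime_iff_eq hp (by norm_num)).mp this)
  have h2F : (2 : F) ≠ 0 := by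
    intro h
    have : p ∣ 2 := by
      have := (ZMod.natCast_eq_zero_iff 2 p).mp (by exact_mod_cast h)
      exact this
    exact hp2 ((Nat.prime_dvd_prime_iff_eq hp (by norm_num)).mp this)
  -- casts
  have hcast5 : (algebraMap F R) 5 = 5 := by push_cast; rw [map_ofNat]
  have hcast2 : (algebraMap F R) 2 = 2 := by rw [map_ofNat]
  have h2R : (2 : R) ≠ 0 := by
    rw [← hcast2]
    exact fun h => h2F (hinj (by rw [h, map_zero]))
  -- s is a unit
  have hsu : IsUnit s := by
    apply IsUnit.of_mul_eq_one (a := s) ((algebraMap F R) (5⁻¹) * s)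
    rw [mul_comm ((algebraMap F R) (5⁻¹)), ← mul_assoc]
    have : s * s = 5 := by rw [← sq]; exact hs
    rw [this, ← hcast5, ← map_mul, mul_inv_cancel₀ h5F, map_one]
  have h2u : IsUnit (2 : R) := by
    apply IsUnit.of_mul_eq_one ((algebraMap F R) (2⁻¹))
    rw [← hcast2, ← map_mul, mul_inv_cancel₀ h2F, map_one]
  -- φ and ψ are units
  have hφu : IsUnit φ := IsUnit.of_mul_eq_one (a := φ) (-ψ) (by rw [mul_neg, hφψ, neg_neg])
  have hψu : IsUnit ψ := IsUnit.of_mul_eq_one (a := ψ) (-φ) (by rw [mul_neg, mul_comm, hφψ, neg_neg])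
  -- Binet
  have binet : ∀ n : ℕ, ((Nat.fib n : ℕ) : R) * s = φ ^ n - ψ ^ n := by
    have key : ∀ n : ℕ, ((Nat.fib n : ℕ) : R) * s = φ ^ n - ψ ^ n ∧
        ((Nat.fib (n+1) : ℕ) : R) * s = φ ^ (n+1) - ψ ^ (n+1) := by
      intro n
      induction n with
      | zero => constructor <;> simp [hsdef, hψdef] <;> ring
      | succ n ih =>
        refine ⟨ih.2, ?_⟩
        rw [Nat.fib_add_two]
        push_cast
        have e1 : φ ^ (n + 2) = φ ^ (n+1) + φ ^ n := by
          have : φ ^ (n+2) = φ ^ n * φ ^ 2 := by ring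
          rw [this, hφ]; ring
        have e2 : ψ ^ (n + 2) = ψ ^ (n+1) + ψ ^ n := by
          have : ψ ^ (n+2) = ψ ^ n * ψ ^ 2 := by ring
          rw [this, hψ]; ring
        rw [e1, e2]
        have := ih.1; have := ih.2
        push_cast at *
        linear_combination ih.1 + ih.2
    exact fun n => (key n).1
  -- Frobenius
  set ε : F := (5 : F) ^ ((p - 1) / 2) with hεdef
  have hε : ε = 1 ∨ ε = -1 := by
    rw [← mul_self_eq_one_iff, hεdef, ← pow_add]
    have : (p - 1) / 2 + (p - 1) / 2 = p - 1 := by omega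
    rw [this]
    exact ZMod.pow_card_sub_one_eq_one h5F
  have hsp : s ^ p = (algebraMap F R) ε * s := by
    have hpodd : 2 * ((p - 1) / 2) + 1 = p := by omega
    calc s ^ p = (s ^ 2) ^ ((p-1)/2) * s := by rw [← pow_mul, ← pow_succ, hpodd]
    _ = (algebraMap F R) ε * s := by
        rw [hs, hεdef, map_pow, hcast5]
  have h2φp : 2 * φ ^ p = 1 + (algebraMap F R) ε * s := by
    have h1 : (2 : R) * φ = 1 + s := by rw [hsdef]; ring
    have h2 : ((2:R) * φ) ^ p = (1 + s) ^ p := by rw [h1]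
    rw [mul_pow, add_pow_char, one_pow, hsp] at h2
    have h2p : (2 : R) ^ p = 2 := by
      rw [← hcast2, ← map_pow, ZMod.pow_card, hcast2]
    rw [h2p] at h2
    exact h2
  have h2ψp : 2 * ψ ^ p = 1 - (algebraMap F R) ε * s := by
    have h1 : (2 : R) * ψ = 1 + (-s) := by rw [hsdef, hψdef]; ring
    have h2 : ((2:R) * ψ) ^ p = (1 + (-s)) ^ p := by rw [h1]
    rw [mul_pow, add_pow_char, one_pow, hodd.neg_pow, hsp] at h2
    have h2p : (2 : R) ^ p = 2 := by
      rw [← hcast2, ← map_pow, ZMod.pow_card, hcast2]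
    rw [h2p] at h2
    rw [h2]; ring
  -- now produce k with φ^k = 1, ψ^k = 1
  obtain ⟨k, hk0, hkp, hφk, hψk⟩ :
      ∃ k : ℕ, 0 < k ∧ ¬ p ∣ k ∧ φ ^ k = 1 ∧ ψ ^ k = 1 := by
    rcases hε with hε1 | hε1
    · -- ε = 1 : period p - 1
      refine ⟨p - 1, by omega, fun hdvd => ?_, ?_, ?_⟩
      · exact absurd (Nat.le_of_dvd (by omega) hdvd) (by omega)
      · have hφp : φ ^ p = φ := by
          apply h2u.mul_left_cancel
          rw [h2φp, hε1, map_one, one_mul, hsdef]; ring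
        have : φ ^ (p - 1) * φ = 1 * φ := by
          rw [one_mul, ← pow_succ]
          have : p - 1 + 1 = p := by omega
          rw [this, hφp]
        exact hφu.mul_right_cancel this
      · have hψp : ψ ^ p = ψ := by
          apply h2u.mul_left_cancel
          rw [h2ψp, hε1, map_one, one_mul, hsdef, hψdef]; ring
        have : ψ ^ (p - 1) * ψ = 1 * ψ := by
          rw [one_mul, ← pow_succ]
          have : p - 1 + 1 = p := by omega
          rw [this, hψp]
        exact hψu.mul_right_cancel this
    · -- ε = -1 : period 2(p+1)
      refine ⟨2 * (p + 1), by omega, fun hdvd => ?_, ?_, ?_⟩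
      · rcases (Nat.Prime.dvd_mul hp).mp hdvd with h | h
        · exact hp2 ((Nat.prime_dvd_prime_iff_eq hp (by norm_num)).mp h)
        · have h1 : p ∣ 1 := (Nat.dvd_add_right (dvd_refl p)).mp h
          exact absurd (Nat.dvd_one.mp h1) hp.one_lt.ne'
      · have hφp : φ ^ p = ψ := by
          apply h2u.mul_left_cancel
          rw [h2φp, hε1, map_neg, map_one, hsdef, hψdef]; ring
        have : φ ^ (2 * (p+1)) = (φ ^ p * φ) ^ 2 := by rw [← pow_succ, ← pow_mul]; ring_nf; rw [pow_add]
        rw [this, hφp, mul_comm, hφψ]; norm_num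
      · have hψp : ψ ^ p = φ := by
          apply h2u.mul_left_cancel
          rw [h2ψp, hε1, map_neg, map_one, hsdef]; rw [neg_one_mul, sub_neg_eq_add]; exact add_sub_cancel _ _
        have : ψ ^ (2 * (p+1)) = (ψ ^ p * ψ) ^ 2 := by rw [← pow_succ, ← pow_mul, mul_comm]
        rw [this, hψp, hφψ]; norm_num
  -- conclude periodicity
  refine ⟨k, hk0, hkp, fun n => ?_⟩
  rw [← ZMod.natCast_eq_natCast_iff]
  apply hinj
  have hcastF : ∀ m : ℕ, (algebraMap F R) ((m : ℕ) : F) = ((m : ℕ) : R) := fun m => map_natCast _ m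
  rw [hcastF, hcastF]
  apply hsu.mul_right_cancel
  rw [binet, binet, pow_add, pow_add, hφk, hψk, mul_one, mul_one]

-- helper: x ≡ y [MOD p] → p ∣ w → w * x ≡ w * y [MOD p ^ 2]
private lemma mul_modEq_sq {p x y w : ℕ} (h : x ≡ y [MOD p]) (hw : p ∣ w) :
    w * x ≡ w * y [MOD p ^ 2] := by
  obtain ⟨t, rfl⟩ := hw
  have := (h.mul_left t).mul_left' (c := p)
  have e : p * (t * x) = p * t * x := by ring
  have e2 : p * (t * y) = p * t * y := by ring
  have e3 : p * p = p ^ 2 := by ring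
  rwa [e, e2, e3] at this

-- (i) : fib (l*α + 1) ≡ fib (α+1)^l [MOD p]
private lemma fib_pow_mod {p α : ℕ} (hpα : p ∣ Nat.fib α) (l : ℕ) :
    Nat.fib (l * α + 1) ≡ Nat.fib (α + 1) ^ l [MOD p] := by
  induction l with
  | zero => simp [Nat.ModEq.refl]
  | succ l ih =>
    have hdvd : p ∣ Nat.fib (l * α) := dvd_trans hpα (Nat.fib_dvd α (l * α) (dvd_mul_left α l))
    have hidx : (l + 1) * α + 1 = l * α + α + 1 := by ring
    rw [hidx, Nat.fib_add]
    have t1 : Nat.fib (l * α) * Nat.fib α ≡ 0 [MOD p] :=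
      Nat.modEq_zero_iff_dvd.mpr (Dvd.dvd.mul_right hdvd _)
    have t2 : Nat.fib (l * α + 1) * Nat.fib (α + 1) ≡ Nat.fib (α+1) ^ l * Nat.fib (α+1) [MOD p] :=
      ih.mul_right _
    calc Nat.fib (l * α) * Nat.fib α + Nat.fib (l * α + 1) * Nat.fib (α + 1)
        ≡ 0 + Nat.fib (α+1) ^ l * Nat.fib (α+1) [MOD p] := t1.add t2
      _ = Nat.fib (α + 1) ^ (l + 1) := by ring

-- (ii) : fib ((l+1)*α) ≡ (l+1) * fib α * fib (α+1)^l [MOD p^2]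
private lemma fib_mul_rank_mod {p α : ℕ} (hα1 : 1 ≤ α) (hpα : p ∣ Nat.fib α) (l : ℕ) :
    Nat.fib ((l + 1) * α) ≡ (l + 1) * Nat.fib α * Nat.fib (α + 1) ^ l [MOD p ^ 2] := by
  induction l with
  | zero => simp [Nat.ModEq.refl]
  | succ l ih =>
    obtain ⟨a, rfl⟩ : ∃ a, α = a + 1 := ⟨α - 1, by omega⟩
    set α := a + 1
    have hfa : Nat.fib a ≡ Nat.fib (α + 1) [MOD p] := by
      have : Nat.fib (α + 1) = Nat.fib a + Nat.fib (a + 1) := Nat.fib_add_two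
      calc Nat.fib a = Nat.fib a + 0 := (Nat.add_zero _).symm
        _ ≡ Nat.fib a + Nat.fib α [MOD p] :=
            (Nat.ModEq.refl _).add (Nat.modEq_zero_iff_dvd.mpr hpα).symm
        _ = Nat.fib (α + 1) := this.symm
    have hidx : (l + 1 + 1) * α = (l + 1) * α + a + 1 := by ring
    rw [hidx, Nat.fib_add]
    have hXdvd : p ∣ (l + 1) * Nat.fib α * Nat.fib (α + 1) ^ l :=
      Dvd.dvd.mul_right (Dvd.dvd.mul_left hpα _) _
    -- T1
    have t1a : Nat.fib ((l+1)*α) * Nat.fib a ≡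
        ((l + 1) * Nat.fib α * Nat.fib (α + 1) ^ l) * Nat.fib a [MOD p ^ 2] := ih.mul_right _
    have t1b : ((l + 1) * Nat.fib α * Nat.fib (α + 1) ^ l) * Nat.fib a ≡
        ((l + 1) * Nat.fib α * Nat.fib (α + 1) ^ l) * Nat.fib (α + 1) [MOD p ^ 2] :=
      mul_modEq_sq hfa hXdvd
    -- T2
    have t2 : Nat.fib ((l+1)*α + 1) * Nat.fib α ≡
        Nat.fib (α + 1) ^ (l+1) * Nat.fib α [MOD p ^ 2] := by
      have h := fib_pow_mod hpα (l + 1) (α := α) (p := p)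
      calc Nat.fib ((l+1)*α + 1) * Nat.fib α
          = Nat.fib α * Nat.fib ((l+1)*α + 1) := Nat.mul_comm _ _
        _ ≡ Nat.fib α * Nat.fib (α + 1) ^ (l+1) [MOD p ^ 2] := mul_modEq_sq h hpα
        _ = Nat.fib (α + 1) ^ (l+1) * Nat.fib α := Nat.mul_comm _ _
    calc Nat.fib ((l+1)*α) * Nat.fib a + Nat.fib ((l+1)*α + 1) * Nat.fib (a + 1)
        ≡ ((l + 1) * Nat.fib α * Nat.fib (α + 1) ^ l) * Nat.fib (α + 1)
          + Nat.fib (α + 1) ^ (l+1) * Nat.fib α [MOD p ^ 2] := (t1a.trans t1b).add t2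
      _ = (l + 1 + 1) * Nat.fib α * Nat.fib (α + 1) ^ (l + 1) := by ring

/-- Main Lemma: if `p ≠ 2, 5` is prime, `n ≥ 1`, `p ∣ F_n` and
`p² ∤ F_n`, then `π(p) ≠ π(p²)`, i.e. `p` is not a Fibonacci-Wieferich prime. -/
theorem pisano_ne_pisano_sq (p n : ℕ) (hp : p.Prime) (hp2 : p ≠ 2) (hp5 : p ≠ 5)
    (hn : 0 < n) (h1 : p ∣ Nat.fib n) (h2 : ¬ p ^ 2 ∣ Nat.fib n) :
    pisano p ≠ pisano (p ^ 2) := by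
  intro heq
  haveI : Fact p.Prime := ⟨hp⟩
  obtain ⟨k, hk0, hkp, hkper⟩ := exists_period_not_dvd p hp hp2 hp5
  obtain ⟨hπ0, hπper⟩ := pisano_mem hk0 hkper
  have hπdvd : pisano p ∣ k := pisano_dvd hk0 hkper
  have hpπ : ¬ p ∣ pisano p := fun h => hkp (h.trans hπdvd)
  -- facts about K := pisano (p^2)
  have hK0 : 0 < pisano (p ^ 2) := heq ▸ hπ0
  have hKmem : 0 < pisano (p ^ 2) ∧
      ∀ m : ℕ, Nat.fib (m + pisano (p ^ 2)) ≡ Nat.fib m [MOD p ^ 2] := by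
    have hne : {k : ℕ | 0 < k ∧ ∀ m : ℕ, Nat.fib (m + k) ≡ Nat.fib m [MOD p ^ 2]}.Nonempty := by
      by_contra h
      rw [Set.not_nonempty_iff_eq_empty] at h
      have h0 : pisano (p ^ 2) = 0 := by unfold pisano; rw [h, Nat.sInf_empty]
      omega
    exact Nat.sInf_mem hne
  set K := pisano (p ^ 2) with hKdef
  have hpK : ¬ p ∣ K := heq ▸ hpπ
  have hdvdK : p ^ 2 ∣ Nat.fib K := by
    have h0 := hKmem.2 0
    rw [Nat.zero_add] at h0
    exact Nat.modEq_zero_iff_dvd.mp (by simpa [Nat.fib_zero] using h0)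
  have hpfibK : p ∣ Nat.fib K := dvd_trans (dvd_pow_self p two_ne_zero) hdvdK
  -- rank of apparition
  have hex : ∃ m, 0 < m ∧ p ∣ Nat.fib m := ⟨n, hn, h1⟩
  obtain ⟨hα0, hpα⟩ := Nat.find_spec hex
  set α := Nat.find hex with hαdef
  have rank_dvd : ∀ m, 0 < m → p ∣ Nat.fib m → α ∣ m := by
    intro m hm hpm
    have hg0 : 0 < Nat.gcd m α := Nat.gcd_pos_of_pos_left _ hm
    have hpg : p ∣ Nat.fib (Nat.gcd m α) := by
      rw [Nat.fib_gcd]; exact Nat.dvd_gcd hpm hpα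
    have hle1 : α ≤ Nat.gcd m α := Nat.find_min' hex ⟨hg0, hpg⟩
    have hle2 : Nat.gcd m α ≤ α := Nat.le_of_dvd hα0 (Nat.gcd_dvd_right m α)
    have hg : Nat.gcd m α = α := le_antisymm hle2 hle1
    rw [← hg]; exact Nat.gcd_dvd_left m α
  obtain ⟨l, hl⟩ : ∃ l, n = (l + 1) * α := by
    obtain ⟨m, hm⟩ := rank_dvd n hn h1
    have hm0 : 0 < m := by
      rcases Nat.eq_zero_or_pos m with h | h
      · rw [h, Nat.mul_zero] at hm; omega
      · exact h
    refine ⟨m - 1, ?_⟩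
    rw [hm, Nat.sub_add_cancel hm0, Nat.mul_comm]
  obtain ⟨u, hu⟩ : ∃ u, K = (u + 1) * α := by
    obtain ⟨m, hm⟩ := rank_dvd K hK0 hpfibK
    have hm0 : 0 < m := by
      rcases Nat.eq_zero_or_pos m with h | h
      · rw [h, Nat.mul_zero] at hm; omega
      · exact h
    refine ⟨m - 1, ?_⟩
    rw [hm, Nat.sub_add_cancel hm0, Nat.mul_comm]
  -- p^2 ∤ fib α  (encoded as: fib α = p * t with p ∤ t)
  have hii_n := fib_mul_rank_mod hα0 hpα l
  rw [← hl] at hii_n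
  obtain ⟨t, ht⟩ := hpα
  have hpt : ¬ p ∣ t := by
    intro hptdvd
    apply h2
    have hp2α : p ^ 2 ∣ Nat.fib α := by
      obtain ⟨w, rfl⟩ := hptdvd
      exact ⟨w, by rw [ht]; ring⟩
    have hX : p ^ 2 ∣ (l + 1) * Nat.fib α * Nat.fib (α + 1) ^ l :=
      Dvd.dvd.mul_right (hp2α.mul_left _) _
    exact Nat.modEq_zero_iff_dvd.mp (hii_n.trans (Nat.modEq_zero_iff_dvd.mpr hX))
  -- p ∤ fib (α+1)
  have hpc : ¬ p ∣ Nat.fib (α + 1) := by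
    intro hdvd
    have hcop := Nat.fib_coprime_fib_succ α
    have : p ∣ 1 := hcop ▸ Nat.dvd_gcd ⟨t, ht⟩ hdvd
    exact hp.one_lt.ne' (Nat.dvd_one.mp this)
  -- the contradiction from K
  have hii_K := fib_mul_rank_mod hα0 ⟨t, ht⟩ u
  rw [← hu] at hii_K
  have hXK : p ^ 2 ∣ (u + 1) * Nat.fib α * Nat.fib (α + 1) ^ u :=
    Nat.modEq_zero_iff_dvd.mp (hii_K.symm.trans (Nat.modEq_zero_iff_dvd.mpr hdvdK))
  have hpdiv : p ∣ (u + 1) * t * Nat.fib (α + 1) ^ u := by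
    rw [ht] at hXK
    obtain ⟨w, hw⟩ := hXK
    refine ⟨w, Nat.eq_of_mul_eq_mul_left hp.pos ?_⟩
    calc p * ((u + 1) * t * Nat.fib (α + 1) ^ u)
        = (u + 1) * (p * t) * Nat.fib (α + 1) ^ u := by ring
      _ = p ^ 2 * w := hw
      _ = p * (p * w) := by ring
  rcases (Nat.Prime.dvd_mul hp).mp hpdiv with h | h
  · rcases (Nat.Prime.dvd_mul hp).mp h with h' | h'
    · exact hpK (hu ▸ Dvd.dvd.mul_right h' α)
    · exact hpt h'
  · exact hpc (hp.dvd_of_dvd_pow h)
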